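/- For fixed p ∈ (0,1) with α = √(p/(1−p)) and finite multiset S, the function γ(μ) = α⁻²·Σ_{sᵢ < μ}(sᵢ−μ)² + α²·Σ_{sᵢ ≥ μ}(sᵢ−μ)² is continuously differentiable with derivative γ′(μ) = −2α²·Σ_{sᵢ ≥ μ}(sᵢ−μ) − 2α⁻²·Σ_{sᵢ < μ}(sᵢ−μ), and is strictly convex on ℝ. -/

import Mathlib

open Real

noncomputable def Gfun (α s μ : ℝ) : ℝ :=
  α⁻¹ ^ 2 * min (s - μ) 0 ^ 2 + α ^ 2 * max (s - μ) 0 ^ 2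

noncomputable def Gfun' (α s μ : ℝ) : ℝ :=
  -2 * α ^ 2 * max (s - μ) 0 - 2 * α⁻¹ ^ 2 * min (s - μ) 0

lemma maxsq_hasDerivAt (x : ℝ) :
    HasDerivAt (fun y : ℝ => max y 0 ^ 2) (2 * max x 0) x := by
  rcases lt_trichotomy x 0 with hx | hx | hx
  · have hev : (fun y : ℝ => max y 0 ^ 2) =ᶠ[nhds x] fun _ => (0 : ℝ) := by
      filter_upwards [Iio_mem_nhds hx] with y hy
      simp [max_eq_right (le_of_lt (Set.mem_Iio.mp hy))]
    have h0 := (hasDerivAt_const x (0 : ℝ)).congr_of_eventuallyEq hev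
    simpa [max_eq_right hx.le] using h0
  · subst hx
    rw [hasDerivAt_iff_isLittleO, Asymptotics.isLittleO_iff]
    intro c hc
    filter_upwards [Metric.ball_mem_nhds (0 : ℝ) hc] with y hy
    rw [Metric.mem_ball, Real.dist_eq, sub_zero] at hy
    have h1 : (0 : ℝ) ≤ max y 0 := le_max_right _ _
    have h2 : max y 0 ≤ |y| := max_le (le_abs_self y) (abs_nonneg y)
    have h3 : (0:ℝ) ≤ |y| := abs_nonneg y
    simp only [Real.norm_eq_abs]
    have he : max y 0 ^ 2 - max 0 0 ^ 2 - (y - 0) • (2 * max (0:ℝ) 0) = max y 0 ^ 2 := by simp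
    rw [he, abs_of_nonneg (by positivity), sub_zero]
    nlinarith [mul_self_le_mul_self h1 h2, mul_le_mul_of_nonneg_right hy.le h3]
  · have hev : (fun y : ℝ => max y 0 ^ 2) =ᶠ[nhds x] fun y => y ^ 2 := by
      filter_upwards [Ioi_mem_nhds hx] with y hy
      simp [max_eq_left (le_of_lt (Set.mem_Ioi.mp hy))]
    have h0 := (hasDerivAt_pow 2 x).congr_of_eventuallyEq hev
    simpa [max_eq_left hx.le, mul_comm] using h0

lemma minsq_hasDerivAt (x : ℝ) :
    HasDerivAt (fun y : ℝ => min y 0 ^ 2) (2 * min x 0) x := by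
  have h := (maxsq_hasDerivAt (-x)).comp x (hasDerivAt_neg x)
  have heq : ∀ y : ℝ, max (-y) 0 ^ 2 = min y 0 ^ 2 := by
    intro y
    have : max (-y) 0 = - min y 0 := by rw [← neg_zero, max_neg_neg, neg_zero]
    rw [this]
    ring
  have hval : max (-x) 0 = - min x 0 := by rw [← neg_zero, max_neg_neg, neg_zero]
  have h2 : HasDerivAt (fun y : ℝ => min y 0 ^ 2) (2 * max (-x) 0 * (-1)) x := by
    refine HasDerivAt.congr_of_eventuallyEq h ?_
    filter_upwards with y using (heq y).symm
  rw [hval] at h2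
  simpa using h2

lemma Gfun_hasDerivAt (α s μ : ℝ) :
    HasDerivAt (fun x => Gfun α s x) (Gfun' α s μ) μ := by
  have hsub : HasDerivAt (fun x : ℝ => s - x) (-1) μ := (hasDerivAt_id μ).const_sub s
  have hmin := (minsq_hasDerivAt (s - μ)).comp μ hsub
  have hmax := (maxsq_hasDerivAt (s - μ)).comp μ hsub
  have h := ((hmin.const_mul (α⁻¹ ^ 2)).add (hmax.const_mul (α ^ 2)))
  refine h.congr_deriv ?_
  unfold Gfun'
  ring

lemma multiset_sum_hasDerivAt (T : Multiset ℝ) (F F' : ℝ → ℝ → ℝ)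
    (h : ∀ s μ, HasDerivAt (F s) (F' s μ) μ) (μ : ℝ) :
    HasDerivAt (fun x => (T.map fun s => F s x).sum) ((T.map fun s => F' s μ).sum) μ := by
  induction T using Multiset.induction with
  | empty => simpa using hasDerivAt_const μ (0 : ℝ)
  | cons a T ih =>
      simp only [Multiset.map_cons, Multiset.sum_cons]
      exact (h a μ).add ih

lemma multiset_sum_continuous (T : Multiset ℝ) (F : ℝ → ℝ → ℝ)
    (h : ∀ s, Continuous (F s)) :
    Continuous fun x => (T.map fun s => F s x).sum := by
  induction T using Multiset.induction with
  | empty => simpa using continuous_const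
  | cons a T ih =>
      simp only [Multiset.map_cons, Multiset.sum_cons]
      exact (h a).add ih

lemma Gfun'_continuous (α s : ℝ) : Continuous (Gfun' α s) := by
  unfold Gfun'
  have hmax : Continuous fun μ : ℝ => max (s - μ) 0 :=
    (continuous_const.sub continuous_id).max continuous_const
  have hmin : Continuous fun μ : ℝ => min (s - μ) 0 :=
    (continuous_const.sub continuous_id).min continuous_const
  exact ((continuous_const.mul hmax).sub (continuous_const.mul hmin))

lemma Gfun'_strictMono (α : ℝ) (hα : 0 < α) (s : ℝ) : StrictMono (Gfun' α s) := by
  intro a b hab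
  unfold Gfun'
  have h1 : (0 : ℝ) < α ^ 2 := by positivity
  have h2 : (0 : ℝ) < α⁻¹ ^ 2 := by positivity
  have hA : max (s - b) 0 ≤ max (s - a) 0 :=
    max_le_max (by linarith) le_rfl
  have hB : min (s - b) 0 ≤ min (s - a) 0 :=
    min_le_min (by linarith) le_rfl
  have hABa : max (s - a) 0 + min (s - a) 0 = s - a := by rw [max_add_min, add_zero]
  have hABb : max (s - b) 0 + min (s - b) 0 = s - b := by rw [max_add_min, add_zero]
  rcases lt_or_eq_of_le hA with hA' | hA'
  · nlinarith [mul_pos h1 (sub_pos.mpr hA'), mul_nonneg h2.le (sub_nonneg.mpr hB)]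
  · have hB' : min (s - b) 0 < min (s - a) 0 := by
      rcases lt_or_eq_of_le hB with h | h
      · exact h
      · exfalso; rw [← h] at hABa; rw [hA'] at hABb; linarith
    nlinarith [mul_pos h2 (sub_pos.mpr hB'), mul_nonneg h1.le (sub_nonneg.mpr hA)]

theorem asymmetric_normal_gamma_smooth_strictly_convex
    (p : ℝ) (hp : 0 < p) (hp1 : p < 1)
    (S : Multiset ℝ) (hS : S ≠ 0)
    (α : ℝ) (hα : α = Real.sqrt (p / (1 - p)))
    (γ γ' : ℝ → ℝ)
    (hγ : ∀ μ : ℝ, γ μ =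
      α⁻¹ ^ 2 * ((S.filter fun s => s < μ).map fun s => (s - μ) ^ 2).sum
        + α ^ 2 * ((S.filter fun s => μ ≤ s).map fun s => (s - μ) ^ 2).sum)
    (hγ' : ∀ μ : ℝ, γ' μ =
      -2 * α ^ 2 * ((S.filter fun s => μ ≤ s).map fun s => s - μ).sum
        - 2 * α⁻¹ ^ 2 * ((S.filter fun s => s < μ).map fun s => s - μ).sum) :
    (∀ μ : ℝ, HasDerivAt γ (γ' μ) μ) ∧ Continuous γ'
      ∧ StrictConvexOn ℝ Set.univ γ := by
  have hαpos : 0 < α := by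
    rw [hα]
    exact Real.sqrt_pos.mpr (div_pos hp (by linarith))
  -- filter identity
  have hfil : ∀ μ : ℝ, (S.filter fun s => ¬ s < μ) = S.filter fun s => μ ≤ s := by
    intro μ
    exact Multiset.filter_congr fun x _ => not_lt
  have hsplit : ∀ (μ : ℝ) (f : ℝ → ℝ), (S.map f).sum =
      ((S.filter fun s => s < μ).map f).sum + ((S.filter fun s => μ ≤ s).map f).sum := by
    intro μ f
    conv_lhs => rw [← Multiset.filter_add_not (fun s => s < μ) S]
    rw [Multiset.map_add, Multiset.sum_add, hfil]
  have hγsum : ∀ μ : ℝ, γ μ = (S.map fun s => Gfun α s μ).sum := by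
    intro μ
    rw [hγ μ, hsplit μ]
    congr 1
    · rw [← Multiset.sum_map_mul_left]
      refine congrArg Multiset.sum (Multiset.map_congr rfl ?_)
      intro s hs
      have hsμ : s < μ := (Multiset.mem_filter.mp hs).2
      unfold Gfun
      rw [min_eq_left (by linarith), max_eq_right (by linarith)]
      ring
    · rw [← Multiset.sum_map_mul_left]
      refine congrArg Multiset.sum (Multiset.map_congr rfl ?_)
      intro s hs
      have hsμ : μ ≤ s := (Multiset.mem_filter.mp hs).2
      unfold Gfun
      rw [min_eq_right (by linarith), max_eq_left (by linarith)]
      ring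
  have hγ'sum : ∀ μ : ℝ, γ' μ = (S.map fun s => Gfun' α s μ).sum := by
    intro μ
    rw [hγ' μ, hsplit μ]
    rw [sub_eq_add_neg, add_comm]
    congr 1
    · rw [← neg_mul, ← Multiset.sum_map_mul_left]
      refine congrArg Multiset.sum (Multiset.map_congr rfl ?_)
      intro s hs
      have hsμ : s < μ := (Multiset.mem_filter.mp hs).2
      unfold Gfun'
      rw [min_eq_left (by linarith), max_eq_right (by linarith)]
      ring
    · rw [← Multiset.sum_map_mul_left]
      refine congrArg Multiset.sum (Multiset.map_congr rfl ?_)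
      intro s hs
      have hsμ : μ ≤ s := (Multiset.mem_filter.mp hs).2
      unfold Gfun'
      rw [min_eq_right (by linarith), max_eq_left (by linarith)]
      ring
  have hγfun : γ = fun μ => (S.map fun s => Gfun α s μ).sum := funext hγsum
  have hderiv : ∀ μ : ℝ, HasDerivAt γ (γ' μ) μ := by
    intro μ
    rw [hγfun, hγ'sum μ]
    exact multiset_sum_hasDerivAt S (Gfun α) (Gfun' α) (fun s x => Gfun_hasDerivAt α s x) μ
  have hcont : Continuous γ' := by
    have : γ' = fun μ => (S.map fun s => Gfun' α s μ).sum := funext hγ'sum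
    rw [this]
    exact multiset_sum_continuous S (Gfun' α) (fun s => Gfun'_continuous α s)
  refine ⟨hderiv, hcont, ?_⟩
  -- strict convexity
  have hmono : StrictMono γ' := by
    intro a b hab
    rw [hγ'sum a, hγ'sum b]
    obtain ⟨x, hx⟩ := Multiset.exists_mem_of_ne_zero hS
    obtain ⟨T, rfl⟩ : ∃ T, S = x ::ₘ T := ⟨S.erase x, (Multiset.cons_erase hx).symm⟩
    simp only [Multiset.map_cons, Multiset.sum_cons]
    refine add_lt_add_of_lt_of_le (Gfun'_strictMono α hαpos x hab) ?_
    exact Multiset.sum_map_le_sum_map _ _ fun s _ => (Gfun'_strictMono α hαpos s).monotone hab.le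
  have hderivγ : deriv γ = γ' := funext fun μ => (hderiv μ).deriv
  have hc : Continuous γ := by
    have : Differentiable ℝ γ := fun μ => (hderiv μ).differentiableAt
    exact this.continuous
  have := StrictMono.strictConvexOn_univ_of_deriv hc (hderivγ ▸ hmono)
  exact this
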